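/- In Max-Welter, for any k ≥ 2 and any fixed a_1 < a_2 < ... < a_k, there exists a positive integer n ≤ a_k such that for all i ≥ 0, the Sprague-Grundy value of (a_1, ..., a_{k-1}, a_k + n + i) equals a_k + i. -/

import Mathlib

/-- A move in Max-Welter: the coin on the largest occupied square moves to an
empty square strictly to its left. -/
def MWMove (s t : Finset ℕ) : Prop :=
  ∃ (hs : s.Nonempty) (j : ℕ), j < s.max' hs ∧ j ∉ s ∧
    t = insert j (s.erase (s.max' hs))

theorem MWMove.sum_lt {s t : Finset ℕ} (h : MWMove s t) :
    t.sum id < s.sum id := by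
  obtain ⟨hs, j, hj, hjs, rfl⟩ := h
  have hm : s.max' hs ∈ s := s.max'_mem hs
  have hje : j ∉ s.erase (s.max' hs) := fun hc => hjs (Finset.mem_of_mem_erase hc)
  have h2 : (s.erase (s.max' hs)).sum id + s.max' hs = s.sum id :=
    Finset.sum_erase_add s id hm
  rw [Finset.sum_insert hje]
  simp only [id] at *
  omega

/-- Normal-play Sprague-Grundy value of a Max-Welter position. -/
noncomputable def grundy (s : Finset ℕ) : ℕ :=
  sInf {n : ℕ | ∀ t, ∀ _h : MWMove s t, grundy t ≠ n}
termination_by s.sum id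
decreasing_by exact _h.sum_lt

open Classical in
/-- Misère Sprague-Grundy value: terminal positions get value 1. -/
noncomputable def mgrundy (s : Finset ℕ) : ℕ :=
  if ∀ t, ¬ MWMove s t then 1
  else sInf {n : ℕ | ∀ t, ∀ _h : MWMove s t, mgrundy t ≠ n}
termination_by s.sum id
decreasing_by exact _h.sum_lt

/-- Normal play: `s` is a P-position iff every move leads to a non-P-position. -/
def MWPPos (s : Finset ℕ) : Prop :=
  ∀ t, ∀ _h : MWMove s t, ¬ MWPPos t
termination_by s.sum id
decreasing_by exact _h.sum_lt

/-- Misère play: the player to move wins iff there is no move (the opponent made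
the last move and loses), or some move leads to a position losing for the opponent. -/
def MWMisereWin (s : Finset ℕ) : Prop :=
  (∀ t, ¬ MWMove s t) ∨ ∃ t, ∃ _h : MWMove s t, ¬ MWMisereWin t
termination_by s.sum id
decreasing_by exact _h.sum_lt


/-- minimal excludant of a finite set of naturals -/
noncomputable def MWmex (s : Finset ℕ) : ℕ := sInf {n | n ∉ s}

lemma MWmex_not_mem (s : Finset ℕ) : MWmex s ∉ s := by
  have h : {n | n ∉ s}.Nonempty := by
    obtain ⟨n, hn⟩ := s.exists_notMem
    exact ⟨n, hn⟩
  exact Nat.sInf_mem h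

lemma mem_of_lt_MWmex {s : Finset ℕ} {v : ℕ} (h : v < MWmex s) : v ∈ s := by
  by_contra hv
  have h2 : sInf {n | n ∉ s} ≤ v := Nat.sInf_le hv
  rw [MWmex] at h
  omega

lemma MWmex_le_card (s : Finset ℕ) : MWmex s ≤ s.card := by
  have h : Finset.range (MWmex s) ⊆ s := fun v hv =>
    mem_of_lt_MWmex (Finset.mem_range.1 hv)
  simpa using Finset.card_le_card h

lemma MWmex_range (N : ℕ) : MWmex (Finset.range N) = N := by
  have h1 : MWmex (Finset.range N) ≤ N := Nat.sInf_le (by simp)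
  have h2 := MWmex_not_mem (Finset.range N)
  simp only [Finset.mem_range, not_lt] at h2
  omega

/-- grundy as a mex over the options. -/
lemma grundy_eq_MWmex (s : Finset ℕ) (hs : s.Nonempty) :
    grundy s = MWmex (((Finset.range (s.max' hs)).filter (· ∉ s)).image
      (fun x => grundy (insert x (s.erase (s.max' hs))))) := by
  rw [grundy, MWmex]
  congr 1
  ext n
  simp only [Set.mem_setOf_eq, Finset.mem_image, Finset.mem_filter, Finset.mem_range,
    not_exists, not_and]
  constructor
  · intro h x hx
    exact h _ ⟨hs, x, hx.1, hx.2, rfl⟩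
  · rintro h t ⟨hs', x, hx1, hx2, rfl⟩
    exact h x ⟨hx1, hx2⟩

section Welter

variable {B : Finset ℕ} {M : ℕ}

lemma max'_insert_of_lt (hM : M ∈ B) (hmax : ∀ b ∈ B, b ≤ M) {m : ℕ} (hm : M < m) :
    (insert m B).max' ⟨m, Finset.mem_insert_self m B⟩ = m := by
  refine le_antisymm (Finset.max'_le _ _ _ ?_) (Finset.le_max' _ _ (Finset.mem_insert_self m B))
  intro y hy
  rcases Finset.mem_insert.1 hy with rfl | hy
  · exact le_rfl
  · exact le_of_lt (lt_of_le_of_lt (hmax y hy) hm)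

lemma max'_insert_of_le (hM : M ∈ B) (hmax : ∀ b ∈ B, b ≤ M) {j : ℕ} (hj : j < M) :
    (insert j B).max' ⟨j, Finset.mem_insert_self j B⟩ = M := by
  refine le_antisymm (Finset.max'_le _ _ _ ?_)
    (Finset.le_max' _ _ (Finset.mem_insert_of_mem hM))
  intro y hy
  rcases Finset.mem_insert.1 hy with rfl | hy
  · exact le_of_lt hj
  · exact hmax y hy

/-- Small positions have small grundy values. -/
lemma small_bound (hM : M ∈ B) (hmax : ∀ b ∈ B, b ≤ M) {j : ℕ} (hj : j < M)
    (hjB : j ∉ B) : grundy (insert j B) < M := by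
  set s := insert j B with hs
  have hne : s.Nonempty := ⟨j, Finset.mem_insert_self j B⟩
  have hmx : s.max' hne = M := max'_insert_of_le hM hmax hj
  have h := grundy_eq_MWmex s hne
  rw [hmx] at h
  have hsubW : (Finset.range M).filter (· ∉ s) ⊆ (Finset.range M).erase j := by
    intro x hx
    simp only [Finset.mem_filter, Finset.mem_range] at hx
    refine Finset.mem_erase.2 ⟨?_, Finset.mem_range.2 hx.1⟩
    intro hxj
    exact hx.2 (hxj ▸ Finset.mem_insert_self j B)
  have hcW : ((Finset.range M).filter (· ∉ s)).card ≤ M - 1 := by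
    have := Finset.card_le_card hsubW
    rwa [Finset.card_erase_of_mem (Finset.mem_range.2 hj), Finset.card_range] at this
  have hcI := Finset.card_image_le (s := (Finset.range M).filter (· ∉ s))
    (f := fun x => grundy (insert x (s.erase M)))
  have hle := MWmex_le_card (((Finset.range M).filter (· ∉ s)).image
    (fun x => grundy (insert x (s.erase M))))
  omega

/-- The mex recursion for the rightmost coin beyond all others. -/
lemma rec_formula (hM : M ∈ B) (hmax : ∀ b ∈ B, b ≤ M) {m : ℕ} (hm : M < m) :
    grundy (insert m B) =
      MWmex (((Finset.range m).filter (· ∉ B)).image (fun x => grundy (insert x B))) := by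
  set s := insert m B with hs
  have hne : s.Nonempty := ⟨m, Finset.mem_insert_self m B⟩
  have hmx : s.max' hne = m := max'_insert_of_lt hM hmax hm
  have hmB : m ∉ B := fun h => absurd (hmax m h) (by omega)
  have herase : s.erase m = B := Finset.erase_insert hmB
  have hfilter : (Finset.range m).filter (· ∉ s) = (Finset.range m).filter (· ∉ B) := by
    apply Finset.filter_congr
    intro x hx
    simp only [Finset.mem_range] at hx
    simp only [hs, Finset.mem_insert, not_or, eq_iff_iff]
    constructor
    · exact fun h => h.2
    · exact fun h => ⟨by omega, h⟩
  have h := grundy_eq_MWmex s hne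
  rw [hmx, herase, hfilter] at h
  exact h

end Welter

/-- one step of the tail recursion -/
noncomputable def MWF (s : Finset ℕ) : Finset ℕ := insert (MWmex s) s

lemma MWF_card (s : Finset ℕ) : (MWF s).card = s.card + 1 :=
  Finset.card_insert_of_notMem (MWmex_not_mem s)

lemma MWF_iter_card (s : Finset ℕ) : ∀ j, (MWF^[j] s).card = s.card + j := by
  intro j
  induction j with
  | zero => simp
  | succ j ih => rw [Function.iterate_succ_apply', MWF_card, ih]; omega

lemma MWF_iter_subset {s : Finset ℕ} {N : ℕ} (h : s ⊆ Finset.range N) :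
    ∀ j, MWF^[j] s ⊆ Finset.range (max N (s.card + j)) := by
  intro j
  induction j with
  | zero => simpa using h.trans (by simp [Finset.range_subset]; intro x hx; exact Or.inl hx)
  | succ j ih =>
    rw [Function.iterate_succ_apply', MWF]
    intro x hx
    rcases Finset.mem_insert.1 hx with rfl | hx
    · have h1 : MWmex (MWF^[j] s) ≤ s.card + j := by
        have := MWmex_le_card (MWF^[j] s); rwa [MWF_iter_card] at this
      simp only [Finset.mem_range]
      omega
    · have := ih hx
      simp only [Finset.mem_range] at this ⊢
      omega

lemma MWF_iter_eq {s : Finset ℕ} {N : ℕ} (h : s ⊆ Finset.range N) {j : ℕ}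
    (hj : N ≤ s.card + j) : MWF^[j] s = Finset.range (s.card + j) := by
  have hsub : MWF^[j] s ⊆ Finset.range (s.card + j) := by
    have := MWF_iter_subset h j
    rwa [max_eq_right hj] at this
  refine Finset.eq_of_subset_of_card_le hsub ?_
  rw [Finset.card_range, MWF_iter_card]

lemma MWmex_MWF_iter {s : Finset ℕ} {N : ℕ} (h : s ⊆ Finset.range N) {j : ℕ}
    (hj : N ≤ s.card + j) : MWmex (MWF^[j] s) = s.card + j := by
  rw [MWF_iter_eq h hj, MWmex_range]

section Welter2

variable {B : Finset ℕ} {M : ℕ}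

lemma rec_iter (hM : M ∈ B) (hmax : ∀ b ∈ B, b ≤ M) : ∀ d : ℕ,
    ((Finset.range (M + 1 + d)).filter (· ∉ B)).image (fun x => grundy (insert x B)) =
      MWF^[d] (((Finset.range (M + 1)).filter (· ∉ B)).image (fun x => grundy (insert x B))) := by
  intro d
  induction d with
  | zero => rfl
  | succ d ih =>
    have hnotB : M + 1 + d ∉ B := fun h => absurd (hmax _ h) (by omega)
    have hnotR : M + 1 + d ∉ (Finset.range (M + 1 + d)).filter (· ∉ B) := by
      simp
    have hstep : (Finset.range (M + 1 + (d + 1))).filter (· ∉ B) =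
        insert (M + 1 + d) ((Finset.range (M + 1 + d)).filter (· ∉ B)) := by
      have : M + 1 + (d + 1) = (M + 1 + d) + 1 := by omega
      rw [this, Finset.range_add_one, Finset.filter_insert, if_pos hnotB]
    rw [hstep, Finset.image_insert, ih, Function.iterate_succ_apply', MWF]
    congr 1
    rw [rec_formula hM hmax (by omega : M < M + 1 + d), ih]

lemma main_abstract (hM : M ∈ B) (hmax : ∀ b ∈ B, b ≤ M) :
    ∃ n : ℕ, 0 < n ∧ n ≤ M + 1 ∧ ∀ i : ℕ, grundy (insert (M + n + i) B) = M + i := by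
  set T : Finset ℕ :=
    ((Finset.range (M + 1)).filter (· ∉ B)).image (fun x => grundy (insert x B)) with hT
  have hTsub : T ⊆ Finset.range M := by
    intro v hv
    simp only [hT, Finset.mem_image, Finset.mem_filter, Finset.mem_range] at hv
    obtain ⟨j, ⟨hj1, hj2⟩, rfl⟩ := hv
    have hjM : j < M := by
      rcases lt_or_eq_of_le (Nat.lt_succ_iff.1 hj1) with h | h
      · exact h
      · exact absurd (h ▸ hM) hj2
    exact Finset.mem_range.2 (small_bound hM hmax hjM hj2)
  have hc : T.card ≤ M := by
    have := Finset.card_le_card hTsub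
    simpa using this
  refine ⟨M + 1 - T.card, by omega, by omega, ?_⟩
  intro i
  have key : ∀ j : ℕ, M ≤ T.card + j → grundy (insert (M + 1 + j) B) = T.card + j := by
    intro j hj
    rw [rec_formula hM hmax (by omega : M < M + 1 + j), rec_iter hM hmax j,
      MWmex_MWF_iter hTsub hj]
  have h1 : M + (M + 1 - T.card) + i = M + 1 + (M - T.card + i) := by omega
  have h2 := key (M - T.card + i) (by omega)
  rw [h1, h2]
  omega

end Welter2


/-- additive periodicity: there is 0 < n ≤ a_k with
G(a_1,...,a_{k-1}, a_k + n + i) = a_k + i for all i ≥ 0. -/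
theorem maxWelter_additive_periodicity (k : ℕ) (hk : 2 ≤ k) (a : Fin k → ℕ)
    (ha : StrictMono a) :
    ∃ n : ℕ, 0 < n ∧ n ≤ a ⟨k - 1, by omega⟩ ∧ ∀ i : ℕ,
      grundy (insert (a ⟨k - 1, by omega⟩ + n + i)
        ((Finset.image a Finset.univ).erase (a ⟨k - 1, by omega⟩))) =
      a ⟨k - 1, by omega⟩ + i := by
  set A : ℕ := a ⟨k - 1, by omega⟩ with hA
  set M : ℕ := a ⟨k - 2, by omega⟩ with hMdef
  set B : Finset ℕ := (Finset.image a Finset.univ).erase A with hB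
  have hlt : (⟨k - 2, by omega⟩ : Fin k) < ⟨k - 1, by omega⟩ := by
    simp only [Fin.mk_lt_mk]; omega
  have hMA : M < A := ha hlt
  have hM : M ∈ B := by
    refine Finset.mem_erase.2 ⟨ne_of_lt hMA, ?_⟩
    exact Finset.mem_image_of_mem a (Finset.mem_univ _)
  have hmax : ∀ b ∈ B, b ≤ M := by
    intro b hb
    obtain ⟨hbA, hbim⟩ := Finset.mem_erase.1 hb
    obtain ⟨i, _, rfl⟩ := Finset.mem_image.1 hbim
    have hi : i.val ≤ k - 2 := by
      by_contra hcon
      have : i = ⟨k - 1, by omega⟩ := by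
        apply Fin.ext
        have := i.isLt
        simp only []
        omega
      exact hbA (this ▸ rfl)
    exact ha.monotone (by simpa [Fin.le_def] using hi)
  obtain ⟨n, hn0, hnle, hform⟩ := main_abstract hM hmax
  refine ⟨n, hn0, by omega, ?_⟩
  intro i
  have h := hform (A - M + i)
  have e1 : M + n + (A - M + i) = A + n + i := by omega
  have e2 : M + (A - M + i) = A + i := by omega
  rw [e1, e2] at h
  exact h
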